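/- Let $1\leq d,k\leq n$, $r\geq 2$, let $J\subseteq[n]$ with $|J|=k$, and let $M$ be a random $n\times n$ matrix whose rows are independent and each uniform over binary vectors with exactly $d$ ones. Then with probability at least $1-\exp(-8n/r)$, the number of rows $i$ with $|\mathrm{Supp}(R_i(M))\cap J| \geq rkd/n$ is at most $9n/r$. -/

import Mathlib

open MeasureTheory ProbabilityTheory
open scoped ENNReal
open Finset


lemma card_filter_comp_equiv {α : Type*} [Fintype α] [DecidableEq α] (e : α ≃ α)
    (p : α → Prop) [DecidablePred p] :
    (univ.filter (fun x => p (e x))).card = (univ.filter p).card := by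
  apply Finset.card_bij (fun x _ => e x)
  · intro a ha; simp_all
  · intro a ha b hb h; exact e.injective h
  · intro b hb; exact ⟨e.symm b, by simp_all, by simp⟩

lemma card_filter_lt_fin (n d : ℕ) (h : d ≤ n) :
    (univ.filter (fun j : Fin n => (j : ℕ) < d)).card = d := by
  have : (univ.filter (fun j : Fin n => (j : ℕ) < d)) =
      (Finset.range d).attachFin (fun m hm => lt_of_lt_of_le (Finset.mem_range.mp hm) h) := by
    ext j; simp [Finset.mem_attachFin]
  rw [this, Finset.card_attachFin, Finset.card_range]

def Sd (n d : ℕ) : Finset (Fin n → Bool) := univ.filter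
  (fun v : Fin n → Bool => (univ.filter (fun j => v j = true)).card = d)

lemma col_sum (n d : ℕ) :
    ∑ j : Fin n, ((Sd n d).filter (fun v => v j = true)).card = d * (Sd n d).card := by
  have : ∀ j : Fin n, ((Sd n d).filter (fun v => v j = true)).card
      = ∑ v ∈ Sd n d, if v j = true then 1 else 0 :=
    fun j => Finset.card_filter (fun v => v j = true) (Sd n d)
  simp only [this]
  rw [Finset.sum_comm]
  rw [Finset.sum_congr rfl (fun v hv => ?_), Finset.sum_const, smul_eq_mul, mul_comm]
  have hv' := (Finset.mem_filter.mp hv).2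
  rw [← hv']
  exact (Finset.card_filter _ _).symm

lemma col_const (n d : ℕ) (j j' : Fin n) :
    ((Sd n d).filter (fun v => v j = true)).card = ((Sd n d).filter (fun v => v j' = true)).card := by
  apply Finset.card_bij (fun v _ => v ∘ (Equiv.swap j j'))
  · intro v hv
    simp only [Finset.mem_filter, Finset.mem_univ, true_and] at hv ⊢
    constructor
    · have h1 := hv.1
      simp only [Sd, Finset.mem_filter, Finset.mem_univ, true_and] at h1 ⊢
      exact (card_filter_comp_equiv (Equiv.swap j j') (fun y => v y = true)).trans h1
    · simpa [Function.comp, Equiv.swap_apply_right] using hv.2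
  · intro a _ b _ h
    funext x
    have := congrFun h ((Equiv.swap j j') x)
    simpa [Function.comp] using this
  · intro w hw
    refine ⟨w ∘ (Equiv.swap j j'), ?_, ?_⟩
    · simp only [Finset.mem_filter, Finset.mem_univ, true_and] at hw ⊢
      constructor
      · have h1 := hw.1
        simp only [Sd, Finset.mem_filter, Finset.mem_univ, true_and] at h1 ⊢
        exact (card_filter_comp_equiv (Equiv.swap j j') (fun y => w y = true)).trans h1
      · simpa [Function.comp, Equiv.swap_apply_left] using hw.2
    · funext x; simp [Function.comp]

lemma Sd_card_pos (n d : ℕ) (h : d ≤ n) : 0 < (Sd n d).card := by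
  rw [Finset.card_pos]
  refine ⟨fun j => decide ((j : ℕ) < d), ?_⟩
  simp only [Sd, Finset.mem_filter, Finset.mem_univ, true_and, decide_eq_true_eq]
  exact card_filter_lt_fin n d h

lemma col_count (n d : ℕ) (hn : 0 < n) (j : Fin n) :
    ((Sd n d).filter (fun v => v j = true)).card * n = d * (Sd n d).card := by
  have h1 : ∑ j' : Fin n, ((Sd n d).filter (fun v => v j' = true)).card
      = ((Sd n d).filter (fun v => v j = true)).card * n := by
    rw [Finset.sum_congr rfl (fun j' _ => col_const n d j' j), Finset.sum_const,
      Finset.card_univ, Fintype.card_fin, smul_eq_mul, mul_comm]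
  rw [← h1, col_sum]

/-- For a random matrix whose rows are independent and uniform over binary vectors with
exactly `d` ones, with probability at least `1 - exp(-8n/r)` at most `9n/r` rows have at
least `rkd/n` ones within a fixed set `J` of `k` columns. -/
theorem rows_with_many_ones_in_J
    {Ω : Type*} [MeasureSpace Ω] [IsProbabilityMeasure (ℙ : Measure Ω)]
    (n d k : ℕ) (hd1 : 1 ≤ d) (hdn : d ≤ n) (hk1 : 1 ≤ k) (hkn : k ≤ n)
    (r : ℝ) (hr : 2 ≤ r)
    (J : Finset (Fin n)) (hJ : J.card = k)
    (S : Finset (Fin n → Bool))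
    (hS : S = Finset.univ.filter
      (fun v : Fin n → Bool => (Finset.univ.filter (fun j => v j = true)).card = d))
    (M : Fin n → Ω → (Fin n → Bool))
    (hmeas : ∀ i, Measurable (M i))
    (hind : iIndepFun M ℙ)
    (hunif : ∀ i, ∀ v : Fin n → Bool,
      ℙ {ω | M i ω = v} = if v ∈ S then ((S.card : ℝ≥0∞))⁻¹ else 0) :
    ℙ {ω | (9 * n / r : ℝ) <
        ((Finset.univ.filter (fun i : Fin n =>
          (r * k * d / n : ℝ) ≤
            ((J.filter (fun j => M i ω j = true)).card : ℝ))).card : ℝ)} ≤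
      ENNReal.ofReal (Real.exp (-(8 * n / r))) := by
  classical
  have hSd : S = Sd n d := hS
  subst hSd
  have hn1 : 1 ≤ n := le_trans hk1 hkn
  have hn0 : (0:ℝ) < n := by exact_mod_cast hn1
  have hr0 : (0:ℝ) < r := lt_of_lt_of_le two_pos hr
  have hScard : 0 < (Sd n d).card := Sd_card_pos n d hdn
  have hScard0 : (0:ℝ) < (Sd n d).card := by exact_mod_cast hScard
  set badv : (Fin n → Bool) → Prop :=
    fun v => (r * k * d / n : ℝ) ≤ ((J.filter (fun j => v j = true)).card : ℝ) with hbadv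
  set B : Finset (Fin n → Bool) := (Sd n d).filter badv with hB
  -- Per-row probability
  have hAmeasSet : MeasurableSet {v : Fin n → Bool | badv v} :=
    (Set.to_countable _).measurableSet
  have hAmeas : ∀ i, MeasurableSet {ω | badv (M i ω)} := fun i => (hmeas i) hAmeasSet
  have hPbad : ∀ i, ℙ {ω | badv (M i ω)} = (B.card : ℝ≥0∞) / ((Sd n d).card : ℝ≥0∞) := by
    intro i
    have hset : {ω | badv (M i ω)} = ⋃ v ∈ (univ.filter badv : Finset (Fin n → Bool)),
        {ω | M i ω = v} := by
      ext ω
      simp only [Set.mem_setOf_eq, Set.mem_iUnion, Finset.mem_filter, Finset.mem_univ, true_and]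
      exact ⟨fun h => ⟨M i ω, h, rfl⟩, fun ⟨v, hv, he⟩ => he ▸ hv⟩
    rw [hset, measure_biUnion_finset]
    · rw [Finset.sum_congr rfl (fun v _ => hunif i v), Finset.sum_ite_mem,
        Finset.sum_const, nsmul_eq_mul]
      have : (univ.filter badv) ∩ (Sd n d) = B := by
        ext v; simp [hB, Finset.mem_filter, and_comm]
      rw [this, div_eq_mul_inv]
    · intro v hv w hw hvw
      simp only [Function.onFun]
      apply Set.disjoint_left.mpr
      intro ω h1 h2
      exact hvw (h1.symm.trans h2)
    · intro v hv
      have : {ω | M i ω = v} = M i ⁻¹' {v} := by ext ω; simp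
      rw [this]
      exact (hmeas i) (MeasurableSet.singleton v)
  -- counting bound : B.card * r ≤ S.card
  have hcount : (B.card : ℝ) * r ≤ ((Sd n d).card : ℝ) := by
    have hk0 : (0:ℝ) < k := by exact_mod_cast hk1
    have hd0 : (0:ℝ) < d := by exact_mod_cast hd1
    have hkd : (0:ℝ) < (k:ℝ) * d := by positivity
    have h1 : (B.card : ℝ) * (r * k * d / n)
        ≤ ∑ v ∈ B, ((J.filter (fun j => v j = true)).card : ℝ) := by
      have := Finset.card_nsmul_le_sum B
        (fun v => ((J.filter (fun j => v j = true)).card : ℝ)) (r * k * d / n)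
        (fun v hv => (Finset.mem_filter.mp hv).2)
      simpa [nsmul_eq_mul] using this
    have h2 : ∑ v ∈ B, ((J.filter (fun j => v j = true)).card : ℝ)
        ≤ ∑ v ∈ Sd n d, ((J.filter (fun j => v j = true)).card : ℝ) :=
      Finset.sum_le_sum_of_subset_of_nonneg (Finset.filter_subset _ _)
        (fun v _ _ => by positivity)
    have hswap : ∑ v ∈ Sd n d, ((J.filter (fun j => v j = true)).card)
        = ∑ j ∈ J, ((Sd n d).filter (fun v => v j = true)).card := by
      simp only [Finset.card_filter]
      exact Finset.sum_comm
    have h3 : (∑ v ∈ Sd n d, ((J.filter (fun j => v j = true)).card : ℝ)) * n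
        = ((Sd n d).card : ℝ) * ((k:ℝ) * d) := by
      have hc : (∑ v ∈ Sd n d, ((J.filter (fun j => v j = true)).card : ℝ))
          = ∑ j ∈ J, (((Sd n d).filter (fun v => v j = true)).card : ℝ) := by
        exact_mod_cast hswap
      rw [hc, Finset.sum_mul]
      rw [Finset.sum_congr rfl (fun j (_ : j ∈ J) =>
        (show (((Sd n d).filter (fun v => v j = true)).card : ℝ) * n
            = (d:ℝ) * ((Sd n d).card : ℝ) by exact_mod_cast col_count n d (lt_of_lt_of_le one_pos hn1) j))]
      rw [Finset.sum_const, hJ, nsmul_eq_mul]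
      ring
    have h5 : (B.card : ℝ) * (r * k * d / n) * n = (B.card : ℝ) * r * ((k:ℝ) * d) := by
      field_simp
    have h6 : (B.card : ℝ) * r * ((k:ℝ) * d) ≤ ((Sd n d).card : ℝ) * ((k:ℝ) * d) := by
      rw [← h5, ← h3]
      exact mul_le_mul_of_nonneg_right (le_trans h1 h2) (le_of_lt hn0)
    exact le_of_mul_le_mul_right h6 hkd
  have hp : ∀ i, (ℙ {ω | badv (M i ω)}).toReal ≤ 1 / r := by
    intro i
    rw [hPbad i, ENNReal.toReal_div, ENNReal.toReal_natCast, ENNReal.toReal_natCast]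
    rw [div_le_div_iff₀ hScard0 hr0]
    linarith [hcount]
  -- Bernoulli variables
  set g : (Fin n → Bool) → ℝ := Set.indicator {v | badv v} (fun _ => (1:ℝ)) with hg
  set Y : Fin n → Ω → ℝ := fun i => g ∘ M i with hY
  have hgmeas : Measurable g := measurable_of_countable g
  have hYmeas : ∀ i, Measurable (Y i) := fun i => hgmeas.comp (hmeas i)
  have hindY : iIndepFun Y ℙ :=
    hind.comp (fun _ => g) (fun _ => hgmeas)
  have hYind : ∀ i, Y i = Set.indicator {ω | badv (M i ω)} (fun _ => (1:ℝ)) := by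
    intro i; funext ω
    by_cases h : badv (M i ω) <;>
      simp [hY, hg, Function.comp, Set.indicator_apply, h]
  have hY01 : ∀ i ω, Y i ω = 0 ∨ Y i ω = 1 := by
    intro i ω
    by_cases h : badv (M i ω)
    · right; simp [hYind i, Set.indicator_apply, h]
    · left; simp [hYind i, Set.indicator_apply, h]
  set t : ℝ := Real.log 9 with hT
  have ht0 : 0 ≤ t := Real.log_nonneg (by norm_num)
  have hexpt : Real.exp t = 9 := Real.exp_log (by norm_num)
  have hexp_id : ∀ i, (fun ω => Real.exp (t * Y i ω))
      = fun ω => 1 + (Real.exp t - 1) * Y i ω := by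
    intro i; funext ω
    rcases hY01 i ω with h | h <;> rw [h] <;> simp
  have hYint : ∀ i, Integrable (Y i) ℙ := by
    intro i
    rw [hYind i]
    exact (integrable_const (1:ℝ)).indicator (hAmeas i)
  have hintexp : ∀ i, Integrable (fun ω => Real.exp (t * Y i ω)) ℙ := by
    intro i
    rw [hexp_id i]
    exact (integrable_const (1:ℝ)).add ((hYint i).const_mul _)
  have hEY : ∀ i, ∫ ω, Y i ω = (ℙ {ω | badv (M i ω)}).toReal := by
    intro i
    rw [hYind i, integral_indicator_const (1:ℝ) (hAmeas i), smul_eq_mul, mul_one]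
    rfl
  have hmgf : ∀ i, mgf (Y i) ℙ t ≤ Real.exp (8 / r) := by
    intro i
    have h1 : mgf (Y i) ℙ t = 1 + (Real.exp t - 1) * (ℙ {ω | badv (M i ω)}).toReal := by
      rw [mgf]
      rw [hexp_id i]
      rw [integral_add (integrable_const 1) ((hYint i).const_mul _)]
      rw [integral_const, integral_const_mul, hEY i]
      simp
    rw [h1]
    have h2 : (Real.exp t - 1) * (ℙ {ω | badv (M i ω)}).toReal ≤ 8 / r := by
      have hnn := ENNReal.toReal_nonneg (a := ℙ {ω | badv (M i ω)})
      have := hp i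
      rw [hexpt]
      have h8 : (8:ℝ)/r = 8*(1/r) := by ring
      rw [h8]
      linarith
    calc 1 + (Real.exp t - 1) * (ℙ {ω | badv (M i ω)}).toReal ≤ 1 + 8 / r := by linarith
      _ ≤ Real.exp (8 / r) := by
          have := Real.add_one_le_exp (8 / r); linarith
  -- Chernoff
  set N : Ω → ℝ := fun ω => ∑ i : Fin n, Y i ω with hN
  have hNsum : ∀ ω, N ω = ∑ i : Fin n, Y i ω := fun ω => rfl
  have hNfun : N = ∑ i : Fin n, Y i := funext fun ω => (Finset.sum_apply ω univ Y).symm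
  have hNcard : ∀ ω, ((Finset.univ.filter (fun i : Fin n =>
      (r * k * d / n : ℝ) ≤ ((J.filter (fun j => M i ω j = true)).card : ℝ))).card : ℝ)
      = N ω := by
    intro ω
    rw [hNsum]
    rw [Finset.card_filter]
    push_cast
    refine Finset.sum_congr rfl (fun i _ => ?_)
    by_cases h : badv (M i ω)
    · rw [if_pos h, hYind i]
      exact (Set.indicator_of_mem (show ω ∈ {ω' | badv (M i ω')} from h) (fun _ => (1:ℝ))).symm
    · rw [if_neg h, hYind i]
      exact (Set.indicator_of_notMem (show ω ∉ {ω' | badv (M i ω')} from h) (fun _ => (1:ℝ))).symm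
  have hNle : ∀ ω, N ω ≤ n := by
    intro ω
    rw [← hNcard ω]
    have hle : (Finset.univ.filter (fun i : Fin n =>
        (r * k * d / n : ℝ) ≤ ((J.filter (fun j => M i ω j = true)).card : ℝ))).card ≤ n := by
      refine le_trans (Finset.card_filter_le _ _) ?_
      simp
    exact_mod_cast hle
  have hNint : Integrable (fun ω => Real.exp (t * N ω)) ℙ := by
    refine Integrable.mono' (integrable_const (Real.exp (t * n))) ?_ ?_
    · exact (((Finset.measurable_sum univ (fun i _ => hYmeas i)).const_mul t).exp).aestronglyMeasurable
    · refine Filter.Eventually.of_forall (fun ω => ?_)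
      rw [Real.norm_eq_abs, abs_of_pos (Real.exp_pos _), Real.exp_le_exp]
      exact mul_le_mul_of_nonneg_left (hNle ω) ht0
  have hchern : (ℙ {ω | (9 * n / r : ℝ) ≤ N ω}).toReal
      ≤ Real.exp (-t * (9 * n / r)) * mgf N ℙ t :=
    measure_ge_le_exp_mul_mgf (9 * n / r) ht0 hNint
  have hmgfN : mgf N ℙ t ≤ Real.exp (n * (8 / r)) := by
    rw [hNfun, hindY.mgf_sum hYmeas]
    calc ∏ i : Fin n, mgf (Y i) ℙ t ≤ ∏ _i : Fin n, Real.exp (8 / r) :=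
          Finset.prod_le_prod (fun i _ => mgf_nonneg) (fun i _ => hmgf i)
      _ = Real.exp (n * (8 / r)) := by
          rw [Finset.prod_const, Finset.card_univ, Fintype.card_fin, ← Real.exp_nat_mul]
  -- final
  have hfinal : Real.exp (-t * (9 * n / r)) * Real.exp (n * (8 / r))
      ≤ Real.exp (-(8 * n / r)) := by
    rw [← Real.exp_add, Real.exp_le_exp]
    have ht2 : (2:ℝ) ≤ t := by
      rw [hT, Real.le_log_iff_exp_le (by norm_num)]
      have h2 : Real.exp 2 = Real.exp 1 * Real.exp 1 := by
        rw [← Real.exp_add]; norm_num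
      nlinarith [Real.exp_one_lt_d9, Real.exp_pos 1]
    have hnr : (0:ℝ) ≤ n / r := by positivity
    have : -t * (9 * n / r) + n * (8 / r) = (n / r) * (8 - 9 * t) := by ring
    rw [this]
    have : -(8 * n / r) = (n / r) * (-8) := by ring
    rw [this]
    apply mul_le_mul_of_nonneg_left _ hnr
    linarith
  calc ℙ {ω | (9 * n / r : ℝ) <
        ((Finset.univ.filter (fun i : Fin n =>
          (r * k * d / n : ℝ) ≤
            ((J.filter (fun j => M i ω j = true)).card : ℝ))).card : ℝ)}
      ≤ ℙ {ω | (9 * n / r : ℝ) ≤ N ω} := by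
        apply measure_mono
        intro ω hω
        simp only [Set.mem_setOf_eq] at hω ⊢
        rw [← hNcard ω]
        exact le_of_lt hω
    _ = ENNReal.ofReal ((ℙ {ω | (9 * n / r : ℝ) ≤ N ω}).toReal) :=
        (ENNReal.ofReal_toReal (measure_ne_top _ _)).symm
    _ ≤ ENNReal.ofReal (Real.exp (-t * (9 * n / r)) * mgf N ℙ t) :=
        ENNReal.ofReal_le_ofReal hchern
    _ ≤ ENNReal.ofReal (Real.exp (-(8 * n / r))) := by
        apply ENNReal.ofReal_le_ofReal
        calc Real.exp (-t * (9 * n / r)) * mgf N ℙ t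
            ≤ Real.exp (-t * (9 * n / r)) * Real.exp (n * (8 / r)) := by
              apply mul_le_mul_of_nonneg_left hmgfN (le_of_lt (Real.exp_pos _))
          _ ≤ Real.exp (-(8 * n / r)) := hfinal
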